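/- Let K be a group, let Z be a subgroup of the center of K, and let A, B be abelian subgroups of K such that every element of K can be written as a product a·b·z with a ∈ A, b ∈ B, z ∈ Z. Suppose moreover that all commutators of K lie in Z. Then the commutator subgroup [K,K] equals the subgroup generated by the set {[a,b] : a ∈ A, b ∈ B}. -/

import Mathlib

open scoped commutatorElement

/-- If `Z ≤ Z(K)`, `A, B` are abelian subgroups with `K = A·B·Z`, and all
commutators of `K` lie in `Z`, then `[K,K]` is generated by the commutators
`[a,b]` with `a ∈ A`, `b ∈ B`. -/
theorem commutator_subgroup_generated_by_AB {K : Type*} [Group K]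
    (Z : Subgroup K) (hZ : Z ≤ Subgroup.center K) (A B : Subgroup K)
    (hAab : ∀ x ∈ A, ∀ y ∈ A, x * y = y * x)
    (hBab : ∀ x ∈ B, ∀ y ∈ B, x * y = y * x)
    (hfact : ∀ g : K, ∃ a ∈ A, ∃ b ∈ B, ∃ z ∈ Z, g = a * b * z)
    (hcomm : ∀ g h : K, g⁻¹ * h⁻¹ * g * h ∈ Z) :
    commutator K =
      Subgroup.closure {x : K | ∃ a ∈ A, ∃ b ∈ B, x = a⁻¹ * b⁻¹ * a * b} := by
  -- all commutators are central
  have hc : ∀ g h : K, ⁅g, h⁆ ∈ Subgroup.center K := by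
    intro g h
    have := hZ (hcomm g⁻¹ h⁻¹)
    simpa [commutatorElement_def, mul_assoc] using this
  have hswap : ∀ g h x y : K, ⁅g, h⁆ * ⁅x, y⁆ = ⁅x, y⁆ * ⁅g, h⁆ := by
    intro g h x y
    exact (Subgroup.mem_center_iff.mp (hc g h) ⁅x, y⁆).symm
  -- bilinearity
  have h2 : ∀ a b c : K, ⁅a * b, c⁆ = ⁅a, c⁆ * ⁅b, c⁆ := by
    intro a b c
    have e1 : a * ⁅b, c⁆ = ⁅b, c⁆ * a := Subgroup.mem_center_iff.mp (hc b c) a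
    have : ⁅a * b, c⁆ = a * ⁅b, c⁆ * (c * a⁻¹ * c⁻¹) := by
      simp only [commutatorElement_def]; group
    rw [this, e1, hswap a c b c]
    simp only [commutatorElement_def]; group
  have h3 : ∀ a b c : K, ⁅a, b * c⁆ = ⁅a, b⁆ * ⁅a, c⁆ := by
    intro a b c
    have : ⁅a, b * c⁆ = ⁅b * c, a⁆⁻¹ := by rw [commutatorElement_inv]
    rw [this, h2, mul_inv_rev, commutatorElement_inv, commutatorElement_inv]
    exact hswap a c a b
  have hzdrop : ∀ z : K, z ∈ Z → ∀ h : K, ⁅z, h⁆ = 1 := by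
    intro z hz h
    exact commutatorElement_eq_one_iff_mul_comm.mpr ((hZ hz).comm h)
  apply le_antisymm
  · rw [commutator, Subgroup.commutator_le]
    intro g _ h _
    obtain ⟨a, ha, b, hb, z, hz, rfl⟩ := hfact g
    obtain ⟨a', ha', b', hb', z', hz', rfl⟩ := hfact h
    have key : ⁅a * b * z, a' * b' * z'⁆ = ⁅a, b'⁆ * ⁅b, a'⁆ := by
      rw [h2, h2, hzdrop z hz, mul_one, h3, h3, h3, h3]
      have e1 : ⁅a, z'⁆ = 1 := by
        rw [← commutatorElement_inv, hzdrop z' hz', inv_one]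
      have e2 : ⁅b, z'⁆ = 1 := by
        rw [← commutatorElement_inv, hzdrop z' hz', inv_one]
      have e3 : ⁅a, a'⁆ = 1 := commutatorElement_eq_one_iff_mul_comm.mpr (hAab a ha a' ha')
      have e4 : ⁅b, b'⁆ = 1 := commutatorElement_eq_one_iff_mul_comm.mpr (hBab b hb b' hb')
      rw [e1, e2, e3, e4]
      group
    rw [key]
    have m1 : ⁅a, b'⁆ ∈ Subgroup.closure {x : K | ∃ a ∈ A, ∃ b ∈ B, x = a⁻¹ * b⁻¹ * a * b} := by
      apply Subgroup.subset_closure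
      exact ⟨a⁻¹, A.inv_mem ha, b'⁻¹, B.inv_mem hb', by simp [commutatorElement_def, mul_assoc]⟩
    have m2 : ⁅b, a'⁆ ∈ Subgroup.closure {x : K | ∃ a ∈ A, ∃ b ∈ B, x = a⁻¹ * b⁻¹ * a * b} := by
      rw [← commutatorElement_inv]
      apply Subgroup.inv_mem
      apply Subgroup.subset_closure
      exact ⟨a'⁻¹, A.inv_mem ha', b⁻¹, B.inv_mem hb, by simp [commutatorElement_def, mul_assoc]⟩
    exact Subgroup.mul_mem _ m1 m2
  · rw [Subgroup.closure_le]
    rintro x ⟨a, ha, b, hb, rfl⟩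
    have : a⁻¹ * b⁻¹ * a * b = ⁅a⁻¹, b⁻¹⁆ := by
      simp [commutatorElement_def, mul_assoc]
    rw [this]
    exact Subgroup.commutator_mem_commutator (Subgroup.mem_top _) (Subgroup.mem_top _)
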